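/- In a B3-category, the medial map m_{A,B,C,D} is strong: it is both a ∨-monoid morphism and a ∧-comonoid morphism; moreover nm = ∇_t = Π_{t∨t} is strong, and the class of strong maps is closed under ∧ and ∨. -/

import Mathlib

open CategoryTheory CategoryTheory.MonoidalCategory

universe v u

/-- The canonical "middle-exchange" map `(A∧B)∧(X∧Y) ⟶ (A∧X)∧(B∧Y)` for the
`∧`-monoidal structure (i.e. `id ∧ σ ∧ id` up to coherence). -/
def exch {C : Type u} [Category.{v} C] [MonoidalCategory C] [SymmetricCategory C]
    (A B X Y : C) : (A ⊗ B) ⊗ (X ⊗ Y) ⟶ (A ⊗ X) ⊗ (B ⊗ Y) :=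
  (α_ A B (X ⊗ Y)).hom ≫ (𝟙 A ⊗ₘ (α_ B X Y).inv) ≫
    (𝟙 A ⊗ₘ ((β_ B X).hom ⊗ₘ 𝟙 Y)) ≫ (𝟙 A ⊗ₘ (α_ X B Y).hom) ≫ (α_ A X (B ⊗ Y)).inv

/-- A second symmetric monoidal structure (the "disjunction" `∨` with unit `f`)
on a category, given as explicit data with the usual naturality and coherence
axioms of a symmetric monoidal category. -/
structure VStr (C : Type u) [Category.{v} C] where
  vee : C → C → C
  vHom : ∀ {A B X Y : C}, (A ⟶ B) → (X ⟶ Y) → (vee A X ⟶ vee B Y)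
  bot : C
  vHom_id : ∀ A B : C, vHom (𝟙 A) (𝟙 B) = 𝟙 (vee A B)
  vHom_comp : ∀ {A B X Y Z W : C} (f : A ⟶ B) (g : B ⟶ X) (h : Y ⟶ Z) (k : Z ⟶ W),
    vHom (f ≫ g) (h ≫ k) = vHom f h ≫ vHom g k
  vassoc : ∀ A B X : C, vee (vee A B) X ≅ vee A (vee B X)
  vbraid : ∀ A B : C, vee A B ≅ vee B A
  vrunit : ∀ A : C, vee A bot ≅ A
  vlunit : ∀ A : C, vee bot A ≅ A
  vassoc_nat : ∀ {A B X A' B' X' : C} (f : A ⟶ A') (g : B ⟶ B') (h : X ⟶ X'),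
    vHom (vHom f g) h ≫ (vassoc A' B' X').hom = (vassoc A B X).hom ≫ vHom f (vHom g h)
  vbraid_nat : ∀ {A B A' B' : C} (f : A ⟶ A') (g : B ⟶ B'),
    vHom f g ≫ (vbraid A' B').hom = (vbraid A B).hom ≫ vHom g f
  vrunit_nat : ∀ {A A' : C} (f : A ⟶ A'),
    vHom f (𝟙 bot) ≫ (vrunit A').hom = (vrunit A).hom ≫ f
  vlunit_nat : ∀ {A A' : C} (f : A ⟶ A'),
    vHom (𝟙 bot) f ≫ (vlunit A').hom = (vlunit A).hom ≫ f
  vpentagon : ∀ A B X Y : C,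
    (vassoc (vee A B) X Y).hom ≫ (vassoc A B (vee X Y)).hom =
      vHom (vassoc A B X).hom (𝟙 Y) ≫ (vassoc A (vee B X) Y).hom ≫
        vHom (𝟙 A) (vassoc B X Y).hom
  vhexagon : ∀ A B X : C,
    (vassoc A B X).hom ≫ (vbraid A (vee B X)).hom ≫ (vassoc B X A).hom =
      vHom (vbraid A B).hom (𝟙 X) ≫ (vassoc B A X).hom ≫ vHom (𝟙 B) (vbraid A X).hom
  vtriangle : ∀ A B : C,
    (vassoc A bot B).hom ≫ vHom (𝟙 A) (vlunit B).hom = vHom (vrunit A).hom (𝟙 B)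
  vsymm : ∀ A B : C, (vbraid A B).hom ≫ (vbraid B A).hom = 𝟙 (vee A B)

namespace VStr

variable {C : Type u} [Category.{v} C] (S : VStr C)

/-- The middle-exchange map `(A∨B)∨(X∨Y) ⟶ (A∨X)∨(B∨Y)` for the `∨`-structure. -/
def vexch (A B X Y : C) :
    S.vee (S.vee A B) (S.vee X Y) ⟶ S.vee (S.vee A X) (S.vee B Y) :=
  (S.vassoc A B (S.vee X Y)).hom ≫ S.vHom (𝟙 A) (S.vassoc B X Y).inv ≫
    S.vHom (𝟙 A) (S.vHom (S.vbraid B X).hom (𝟙 Y)) ≫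
    S.vHom (𝟙 A) (S.vassoc X B Y).hom ≫ (S.vassoc A X (S.vee B Y)).inv

end VStr

/-- A `B2`-category structure (without the `*`-autonomous negation): two
symmetric monoidal structures `∧` (the ambient one) and `∨` (given by a
`VStr`), cocommutative `∧`-comonoids `(Δ, Π)` and commutative `∨`-monoids
`(∇, ⊓)` on every object, satisfying the axioms B2a, B2c and their duals. -/
structure B2 (C : Type u) [Category.{v} C] [MonoidalCategory C] [SymmetricCategory C]
    extends VStr C where
  Δ : ∀ A : C, A ⟶ A ⊗ A
  Pi : ∀ A : C, A ⟶ 𝟙_ C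
  coassoc : ∀ A : C, Δ A ≫ (Δ A ⊗ₘ 𝟙 A) ≫ (α_ A A A).hom = Δ A ≫ (𝟙 A ⊗ₘ Δ A)
  cocomm : ∀ A : C, Δ A ≫ (β_ A A).hom = Δ A
  counit_r : ∀ A : C, Δ A ≫ (𝟙 A ⊗ₘ Pi A) ≫ (ρ_ A).hom = 𝟙 A
  counit_l : ∀ A : C, Δ A ≫ (Pi A ⊗ₘ 𝟙 A) ≫ (λ_ A).hom = 𝟙 A
  nab : ∀ A : C, vee A A ⟶ A
  cap : ∀ A : C, bot ⟶ A
  vcoassoc : ∀ A : C, (vassoc A A A).hom ≫ vHom (𝟙 A) (nab A) ≫ nab A =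
    vHom (nab A) (𝟙 A) ≫ nab A
  vcomm : ∀ A : C, (vbraid A A).hom ≫ nab A = nab A
  vunit_r : ∀ A : C, (vrunit A).inv ≫ vHom (𝟙 A) (cap A) ≫ nab A = 𝟙 A
  vunit_l : ∀ A : C, (vlunit A).inv ≫ vHom (cap A) (𝟙 A) ≫ nab A = 𝟙 A
  B2a : Pi (𝟙_ C) = 𝟙 (𝟙_ C)
  B2c : ∀ A B : C, Δ (A ⊗ B) = (Δ A ⊗ₘ Δ B) ≫ exch A A B B
  B2a' : cap bot = 𝟙 bot
  B2c' : ∀ A B : C, nab (vee A B) = toVStr.vexch A B A B ≫ vHom (nab A) (nab B)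

/-- A `B2`-category with a natural medial map satisfying B3c and its dual B3c'. -/
structure B2M (C : Type u) [Category.{v} C] [MonoidalCategory C] [SymmetricCategory C]
    extends B2 C where
  med : ∀ A B X Y : C, vee (A ⊗ B) (X ⊗ Y) ⟶ (vee A X) ⊗ (vee B Y)
  med_nat : ∀ {A B X Y A' B' X' Y' : C}
    (f : A ⟶ A') (g : B ⟶ B') (h : X ⟶ X') (k : Y ⟶ Y'),
    vHom (f ⊗ₘ g) (h ⊗ₘ k) ≫ med A' B' X' Y' = med A B X Y ≫ (vHom f h ⊗ₘ vHom g k)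
  B3c : ∀ A B : C, Δ (vee A B) = vHom (Δ A) (Δ B) ≫ med A A B B
  B3c' : ∀ A B : C, nab (A ⊗ B) = med A B A B ≫ (nab A ⊗ₘ nab B)

/-- A `B3`-category: a `B2`-category with medial, a nullary medial map
satisfying B3b, its dual, and the axiom B3a (`nm = ∇_t`, dually `nm' = Δ_f`). -/
structure B3 (C : Type u) [Category.{v} C] [MonoidalCategory C] [SymmetricCategory C]
    extends B2M C where
  nm : vee (𝟙_ C) (𝟙_ C) ⟶ 𝟙_ C
  B3b : ∀ A B : C, Pi (vee A B) = vHom (Pi A) (Pi B) ≫ nm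
  B3a : nm = nab (𝟙_ C)
  nm' : bot ⟶ bot ⊗ bot
  B3b' : ∀ A B : C, cap (A ⊗ B) = nm' ≫ (cap A ⊗ₘ cap B)
  B3a' : nm' = Δ bot

namespace B3

variable {C : Type u} [Category.{v} C] [MonoidalCategory C] [SymmetricCategory C]
  (S : B3 C)

/-- A map is *strong* if it is both a `∨`-monoid morphism and a
`∧`-comonoid morphism. -/
def Strong {A B : C} (f : A ⟶ B) : Prop :=
  S.nab A ≫ f = S.vHom f f ≫ S.nab B ∧
  S.cap A ≫ f = S.cap B ∧
  f ≫ S.Pi B = S.Pi A ∧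
  f ≫ S.Δ B = S.Δ A ≫ (f ⊗ₘ f)

end B3

local infixr:70 " ⊗ " => MonoidalCategoryStruct.tensorHom

theorem tensor_comp {C : Type u} [Category.{v} C] [MonoidalCategory C]
    {X₁ Y₁ Z₁ X₂ Y₂ Z₂ : C} (f₁ : X₁ ⟶ Y₁) (f₂ : X₂ ⟶ Y₂) (g₁ : Y₁ ⟶ Z₁) (g₂ : Y₂ ⟶ Z₂) :
    (f₁ ≫ g₁) ⊗ (f₂ ≫ g₂) = (f₁ ⊗ f₂) ≫ (g₁ ⊗ g₂) :=
  (tensorHom_comp_tensorHom f₁ f₂ g₁ g₂).symm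

theorem tensor_comp_assoc {C : Type u} [Category.{v} C] [MonoidalCategory C]
    {X₁ Y₁ Z₁ X₂ Y₂ Z₂ : C} (f₁ : X₁ ⟶ Y₁) (f₂ : X₂ ⟶ Y₂) (g₁ : Y₁ ⟶ Z₁) (g₂ : Y₂ ⟶ Z₂)
    {W : C} (h : Z₁ ⊗ Z₂ ⟶ W) :
    ((f₁ ≫ g₁) ⊗ (f₂ ≫ g₂)) ≫ h = (f₁ ⊗ f₂) ≫ (g₁ ⊗ g₂) ≫ h := by
  rw [tensor_comp, Category.assoc]

theorem tensor_id {C : Type u} [Category.{v} C] [MonoidalCategory C] (X₁ X₂ : C) :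
    𝟙 X₁ ⊗ 𝟙 X₂ = 𝟙 (X₁ ⊗ X₂) :=
  id_tensorHom_id X₁ X₂

section VCatSec

variable {C : Type u} [Category.{v} C]

/-- Type synonym carrying the `∨`-monoidal structure of `S`. -/
def VCat (_S : VStr C) : Type u := C

instance (S : VStr C) : Category.{v} (VCat S) := inferInstanceAs (Category.{v} C)

instance (S : VStr C) : MonoidalCategoryStruct (VCat S) where
  tensorObj := S.vee
  whiskerLeft X _ _ f := S.vHom (𝟙 X) f
  whiskerRight f Y := S.vHom f (𝟙 Y)
  tensorHom := S.vHom
  tensorUnit := S.bot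
  associator := S.vassoc
  leftUnitor := S.vlunit
  rightUnitor := S.vrunit

instance (S : VStr C) : MonoidalCategory (VCat S) :=
  MonoidalCategory.ofTensorHom
    (id_tensorHom_id := S.vHom_id)
    (id_tensorHom := by intros; rfl)
    (tensorHom_id := by intros; rfl)
    (tensorHom_comp_tensorHom := by intro _ _ _ _ _ _ f₁ f₂ g₁ g₂; exact (S.vHom_comp f₁ g₁ f₂ g₂).symm)
    (associator_naturality := by intro _ _ _ _ _ _ f₁ f₂ f₃; exact S.vassoc_nat f₁ f₂ f₃)
    (leftUnitor_naturality := by intro _ _ f; exact S.vlunit_nat f)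
    (rightUnitor_naturality := by intro _ _ f; exact S.vrunit_nat f)
    (pentagon := fun A B X Y => by exact (S.vpentagon A B X Y).symm)
    (triangle := fun A B => by exact S.vtriangle A B)

lemma VStr.vbraid_inv (S : VStr C) (A B : C) :
    (S.vbraid A B).inv = (S.vbraid B A).hom := by
  rw [← cancel_epi (S.vbraid A B).hom, Iso.hom_inv_id, S.vsymm]

instance (S : VStr C) : BraidedCategory (VCat S) where
  braiding := fun X Y => by exact S.vbraid X Y
  braiding_naturality_right := by intro X Y Z f; exact S.vbraid_nat (𝟙 X) f
  braiding_naturality_left := by intro X Y f Z; exact S.vbraid_nat f (𝟙 Z)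
  hexagon_forward := fun X Y Z => by exact S.vhexagon X Y Z
  hexagon_reverse := by
    intro (X : C) (Y : C) (Z : C)
    show (S.vassoc X Y Z).inv ≫ (S.vbraid (S.vee X Y) Z).hom ≫ (S.vassoc Z X Y).inv =
      S.vHom (𝟙 X) (S.vbraid Y Z).hom ≫ (S.vassoc X Z Y).inv ≫ S.vHom (S.vbraid X Z).hom (𝟙 Y)
    have h := S.vhexagon Z X Y
    rw [← cancel_epi ((S.vassoc Z X Y).hom ≫ (S.vbraid Z (S.vee X Y)).hom ≫
      (S.vassoc X Y Z).hom)]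
    have lhs : ((S.vassoc Z X Y).hom ≫ (S.vbraid Z (S.vee X Y)).hom ≫ (S.vassoc X Y Z).hom) ≫
        ((S.vassoc X Y Z).inv ≫ (S.vbraid (S.vee X Y) Z).hom ≫ (S.vassoc Z X Y).inv) = 𝟙 _ := by
      simp only [Category.assoc, Iso.hom_inv_id_assoc]
      slice_lhs 2 3 => rw [S.vsymm]
      simp
    rw [lhs, h]
    simp only [Category.assoc]
    slice_rhs 3 4 => rw [← S.vHom_comp, S.vsymm]
    rw [Category.id_comp, S.vHom_id]
    simp only [Category.id_comp, Iso.hom_inv_id_assoc]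
    rw [← S.vHom_comp, S.vsymm, Category.id_comp, S.vHom_id]

instance (S : VStr C) : SymmetricCategory (VCat S) where
  symmetry := fun X Y => by exact S.vsymm X Y

end VCatSec

section GenericSide

variable {D : Type*} [Category D] [MonoidalCategory D] [SymmetricCategory D]

lemma braiding_unit_unit : (β_ (𝟙_ D) (𝟙_ D)).hom = 𝟙 _ := by
  rw [← cancel_mono (λ_ (𝟙_ D)).hom, braiding_leftUnitor, unitors_equal, Category.id_comp]

lemma tensorμ_unit_middle (A B : D) : tensorμ A (𝟙_ D) (𝟙_ D) B = 𝟙 ((A ⊗ 𝟙_ D) ⊗ ((𝟙_ D) ⊗ B)) := by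
  dsimp only [tensorμ]
  rw [braiding_unit_unit]
  monoidal


/-- Generic data of a cocommutative comonoid on every object of a symmetric monoidal
category, compatible with the tensor product. -/
structure ComonData (D : Type*) [Category D] [MonoidalCategory D] [SymmetricCategory D] where
  dl : ∀ A : D, A ⟶ A ⊗ A
  pi : ∀ A : D, A ⟶ 𝟙_ D
  coassoc : ∀ A : D, dl A ≫ (dl A ⊗ 𝟙 A) ≫ (α_ A A A).hom = dl A ≫ (𝟙 A ⊗ dl A)
  cocomm : ∀ A : D, dl A ≫ (β_ A A).hom = dl A
  counit_r : ∀ A : D, dl A ≫ (𝟙 A ⊗ pi A) ≫ (ρ_ A).hom = 𝟙 A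
  counit_l : ∀ A : D, dl A ≫ (pi A ⊗ 𝟙 A) ≫ (λ_ A).hom = 𝟙 A
  pi_unit : pi (𝟙_ D) = 𝟙 (𝟙_ D)
  dl_tensor : ∀ A B : D, dl (A ⊗ B) = (dl A ⊗ dl B) ≫ tensorμ A A B B

namespace ComonData

variable (M : ComonData D)

lemma dl_pi_r (A : D) : M.dl A ≫ (𝟙 A ⊗ M.pi A) = (ρ_ A).inv := by
  rw [← cancel_mono (ρ_ A).hom, Iso.inv_hom_id, Category.assoc]
  exact M.counit_r A

lemma dl_pi_l (A : D) : M.dl A ≫ (M.pi A ⊗ 𝟙 A) = (λ_ A).inv := by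
  rw [← cancel_mono (λ_ A).hom, Iso.inv_hom_id, Category.assoc]
  exact M.counit_l A

lemma pi_pi (A : D) : M.dl A ≫ (M.pi A ⊗ M.pi A) = M.pi A ≫ (λ_ (𝟙_ D)).inv := by
  have h : (M.pi A ⊗ M.pi A) = (M.pi A ⊗ 𝟙 A) ≫ (𝟙 (𝟙_ D) ⊗ M.pi A) := by
    rw [← tensor_comp, Category.comp_id, Category.id_comp]
  rw [h, ← Category.assoc, M.dl_pi_l, id_tensorHom, ← leftUnitor_inv_naturality]

lemma dl_unit : M.dl (𝟙_ D) = (λ_ (𝟙_ D)).inv := by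
  have h := M.counit_r (𝟙_ D)
  rw [M.pi_unit, tensor_id, Category.id_comp] at h
  rw [unitors_inv_equal, ← cancel_mono (ρ_ (𝟙_ D)).hom, Iso.inv_hom_id]
  exact h

lemma counit_unique {A : D} (e : A ⟶ 𝟙_ D)
    (hr : M.dl A ≫ (𝟙 A ⊗ e) ≫ (ρ_ A).hom = 𝟙 A)
    (hl : M.dl A ≫ (e ⊗ 𝟙 A) ≫ (λ_ A).hom = 𝟙 A) : e = M.pi A := by
  have h1 : e = M.dl A ≫ (M.pi A ⊗ e) ≫ (λ_ (𝟙_ D)).hom := by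
    conv_lhs => rw [← Category.id_comp e, ← M.counit_l A]
    simp only [Category.assoc]
    rw [← leftUnitor_naturality, ← id_tensorHom, ← tensor_comp_assoc,
      Category.comp_id, Category.id_comp]
  have h2 : M.pi A = M.dl A ≫ (M.pi A ⊗ e) ≫ (ρ_ (𝟙_ D)).hom := by
    conv_lhs => rw [← Category.id_comp (M.pi A), ← hr]
    simp only [Category.assoc]
    rw [← rightUnitor_naturality, ← tensorHom_id, ← tensor_comp_assoc,
      Category.comp_id, Category.id_comp]
  rw [h1, unitors_equal, ← h2]

lemma pi_tensor (A B : D) : M.pi (A ⊗ B) = (M.pi A ⊗ M.pi B) ≫ (λ_ (𝟙_ D)).hom := by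
  refine (M.counit_unique _ ?_ ?_).symm
  · rw [M.dl_tensor]
    have hnat := tensorμ_natural (𝟙 A) (M.pi A) (𝟙 B) (M.pi B)
    rw [tensor_id] at hnat
    have key : 𝟙 (A ⊗ B) ⊗ ((M.pi A ⊗ M.pi B) ≫ (λ_ (𝟙_ D)).hom) =
        (𝟙 (A ⊗ B) ⊗ (M.pi A ⊗ M.pi B)) ≫ ((A ⊗ B) ◁ (λ_ (𝟙_ D)).hom) := by
      rw [← id_tensorHom, ← tensor_comp, Category.comp_id]
    rw [key]
    simp only [Category.assoc]
    slice_lhs 2 3 => rw [← hnat]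
    slice_lhs 1 2 => rw [← tensor_comp, M.dl_pi_r, M.dl_pi_r]
    simp only [Category.assoc]
    rw [← rightUnitor_monoidal, ← tensor_comp, Iso.inv_hom_id, Iso.inv_hom_id, tensor_id]
  · rw [M.dl_tensor]
    have hnat := tensorμ_natural (M.pi A) (𝟙 A) (M.pi B) (𝟙 B)
    rw [tensor_id] at hnat
    have key : ((M.pi A ⊗ M.pi B) ≫ (λ_ (𝟙_ D)).hom) ⊗ 𝟙 (A ⊗ B) =
        ((M.pi A ⊗ M.pi B) ⊗ 𝟙 (A ⊗ B)) ≫ ((λ_ (𝟙_ D)).hom ▷ (A ⊗ B)) := by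
      rw [← tensorHom_id, ← tensor_comp, Category.comp_id]
    rw [key]
    simp only [Category.assoc]
    slice_lhs 2 3 => rw [← hnat]
    slice_lhs 1 2 => rw [← tensor_comp, M.dl_pi_l, M.dl_pi_l]
    simp only [Category.assoc]
    rw [← leftUnitor_monoidal, ← tensor_comp, Iso.inv_hom_id, Iso.inv_hom_id, tensor_id]

lemma hinner_dl (A : D) :
    M.dl A ≫ (𝟙 A ⊗ M.dl A) ≫ (α_ A A A).inv ≫ ((β_ A A).hom ⊗ 𝟙 A) ≫ (α_ A A A).hom =
      M.dl A ≫ (𝟙 A ⊗ M.dl A) := by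
  have h1 : M.dl A ≫ (𝟙 A ⊗ M.dl A) ≫ (α_ A A A).inv = M.dl A ≫ (M.dl A ⊗ 𝟙 A) := by
    rw [← cancel_mono (α_ A A A).hom]
    simp only [Category.assoc, Iso.inv_hom_id, Category.comp_id]
    exact (M.coassoc A).symm
  have h1' := reassoc_of% h1
  rw [h1']
  have h2 : (M.dl A ⊗ 𝟙 A) ≫ ((β_ A A).hom ⊗ 𝟙 A) = (M.dl A ⊗ 𝟙 A) := by
    rw [← tensor_comp, M.cocomm, Category.comp_id]
  have h2' := reassoc_of% h2
  rw [h2']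
  exact M.coassoc A

lemma dl4 (A : D) :
    M.dl A ≫ (M.dl A ⊗ M.dl A) ≫ tensorμ A A A A = M.dl A ≫ (M.dl A ⊗ M.dl A) := by
  dsimp only [tensorμ]
  simp only [← id_tensorHom, ← tensorHom_id]
  have split : (M.dl A ⊗ M.dl A) = (M.dl A ⊗ 𝟙 A) ≫ (𝟙 (A ⊗ A) ⊗ M.dl A) := by
    rw [← tensor_comp, Category.comp_id, Category.id_comp]
  have hnat1 : (𝟙 (A ⊗ A) ⊗ M.dl A) ≫ (α_ A A (A ⊗ A)).hom =
      (α_ A A A).hom ≫ (𝟙 A ⊗ 𝟙 A ⊗ M.dl A) := by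
    have h := associator_naturality (𝟙 A) (𝟙 A) (M.dl A); rwa [tensor_id] at h
  have hnat1' := reassoc_of% hnat1
  have hnat2 : (𝟙 A ⊗ 𝟙 A ⊗ M.dl A) ≫ (α_ A A (A ⊗ A)).inv =
      (α_ A A A).inv ≫ (𝟙 (A ⊗ A) ⊗ M.dl A) := by
    have h := associator_inv_naturality (𝟙 A) (𝟙 A) (M.dl A); rwa [tensor_id] at h
  have hnat2' := reassoc_of% hnat2
  have hco := reassoc_of% (M.coassoc A)
  rw [split]
  simp only [Category.assoc]
  rw [hnat1', hco]
  have merged : (𝟙 A ⊗ M.dl A) ≫ (𝟙 A ⊗ (𝟙 A ⊗ M.dl A)) ≫ (𝟙 A ⊗ (α_ A A A).inv) ≫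
      (𝟙 A ⊗ ((β_ A A).hom ⊗ 𝟙 A)) ≫ (𝟙 A ⊗ (α_ A A A).hom) =
      𝟙 A ⊗ (M.dl A ≫ (𝟙 A ⊗ M.dl A) ≫ (α_ A A A).inv ≫ ((β_ A A).hom ⊗ 𝟙 A) ≫
        (α_ A A A).hom) := by
    simp only [← tensor_comp]; simp
  have merged' := reassoc_of% merged
  rw [merged', M.hinner_dl]
  rw [show (𝟙 A ⊗ (M.dl A ≫ (𝟙 A ⊗ M.dl A))) =
      (𝟙 A ⊗ M.dl A) ≫ (𝟙 A ⊗ (𝟙 A ⊗ M.dl A)) from by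
    rw [← tensor_comp, Category.comp_id]]
  simp only [Category.assoc]
  rw [hnat2]
  have h1 : M.dl A ≫ (𝟙 A ⊗ M.dl A) ≫ (α_ A A A).inv = M.dl A ≫ (M.dl A ⊗ 𝟙 A) := by
    rw [← cancel_mono (α_ A A A).hom]
    simp only [Category.assoc, Iso.inv_hom_id, Category.comp_id]
    exact (M.coassoc A).symm
  have h1' := reassoc_of% h1
  rw [h1']

/-- right projection `A ⊗ B ⟶ A`. -/
noncomputable def projr (A B : D) : A ⊗ B ⟶ A := (𝟙 A ⊗ M.pi B) ≫ (ρ_ A).hom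

/-- left projection `A ⊗ B ⟶ B`. -/
noncomputable def projl (A B : D) : A ⊗ B ⟶ B := (M.pi A ⊗ 𝟙 B) ≫ (λ_ B).hom

lemma projr_pi (A B : D) : M.projr A B ≫ M.pi A = M.pi (A ⊗ B) := by
  rw [ComonData.projr, M.pi_tensor, Category.assoc, ← rightUnitor_naturality, ← tensorHom_id,
    ← tensor_comp_assoc, Category.id_comp, Category.comp_id, unitors_equal]

lemma projl_pi (A B : D) : M.projl A B ≫ M.pi B = M.pi (A ⊗ B) := by
  rw [ComonData.projl, M.pi_tensor, Category.assoc, ← leftUnitor_naturality, ← id_tensorHom,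
    ← tensor_comp_assoc, Category.id_comp, Category.comp_id]

lemma tensorμ_ru (A : D) : tensorμ A A (𝟙_ D) (𝟙_ D) ≫ ((ρ_ A).hom ⊗ (ρ_ A).hom) =
    ((A ⊗ A) ◁ (λ_ (𝟙_ D)).hom) ≫ (ρ_ (A ⊗ A)).hom := by
  rw [tensor_right_unitality]
  slice_rhs 1 2 => rw [← MonoidalCategory.whiskerLeft_comp, Iso.hom_inv_id,
    MonoidalCategory.whiskerLeft_id]
  simp

lemma tensorμ_lu (B : D) : tensorμ (𝟙_ D) (𝟙_ D) B B ≫ ((λ_ B).hom ⊗ (λ_ B).hom) =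
    ((λ_ (𝟙_ D)).hom ▷ (B ⊗ B)) ≫ (λ_ (B ⊗ B)).hom := by
  rw [tensor_left_unitality]
  slice_rhs 1 2 => rw [← comp_whiskerRight, Iso.hom_inv_id, MonoidalCategory.id_whiskerRight]
  simp

lemma projr_dl (A B : D) : M.projr A B ≫ M.dl A = M.dl (A ⊗ B) ≫ (M.projr A B ⊗ M.projr A B) := by
  rw [ComonData.projr, M.dl_tensor]
  rw [show ((𝟙 A ⊗ M.pi B) ≫ (ρ_ A).hom) ⊗ ((𝟙 A ⊗ M.pi B) ≫ (ρ_ A).hom) =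
    ((𝟙 A ⊗ M.pi B) ⊗ (𝟙 A ⊗ M.pi B)) ≫ ((ρ_ A).hom ⊗ (ρ_ A).hom) from tensor_comp _ _ _ _]
  have hnat := tensorμ_natural (𝟙 A) (𝟙 A) (M.pi B) (M.pi B)
  rw [tensor_id] at hnat
  slice_rhs 2 3 => rw [← hnat]
  slice_rhs 1 2 => rw [← tensor_comp, Category.comp_id, M.pi_pi]
  simp only [Category.assoc]
  rw [tensorμ_ru]
  rw [show (M.dl A ⊗ M.pi B ≫ (λ_ (𝟙_ D)).inv) =
    (M.dl A ⊗ M.pi B) ≫ (𝟙 (A ⊗ A) ⊗ (λ_ (𝟙_ D)).inv) from by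
      rw [← tensor_comp, Category.comp_id]]
  simp only [Category.assoc, id_tensorHom]
  slice_rhs 2 3 => rw [← MonoidalCategory.whiskerLeft_comp, Iso.inv_hom_id,
    MonoidalCategory.whiskerLeft_id]
  rw [Category.id_comp]
  rw [show (M.dl A ⊗ M.pi B) = (𝟙 A ⊗ M.pi B) ≫ (M.dl A ⊗ 𝟙 (𝟙_ D)) from by
    rw [← tensor_comp, Category.comp_id, Category.id_comp]]
  simp only [Category.assoc, tensorHom_id]
  rw [rightUnitor_naturality, id_tensorHom]

lemma projl_dl (A B : D) : M.projl A B ≫ M.dl B = M.dl (A ⊗ B) ≫ (M.projl A B ⊗ M.projl A B) := by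
  rw [ComonData.projl, M.dl_tensor]
  rw [show ((M.pi A ⊗ 𝟙 B) ≫ (λ_ B).hom) ⊗ ((M.pi A ⊗ 𝟙 B) ≫ (λ_ B).hom) =
    ((M.pi A ⊗ 𝟙 B) ⊗ (M.pi A ⊗ 𝟙 B)) ≫ ((λ_ B).hom ⊗ (λ_ B).hom) from tensor_comp _ _ _ _]
  have hnat := tensorμ_natural (M.pi A) (M.pi A) (𝟙 B) (𝟙 B)
  rw [tensor_id] at hnat
  slice_rhs 2 3 => rw [← hnat]
  slice_rhs 1 2 => rw [← tensor_comp, Category.comp_id, M.pi_pi]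
  simp only [Category.assoc]
  rw [tensorμ_lu]
  rw [show (M.pi A ≫ (λ_ (𝟙_ D)).inv ⊗ M.dl B) =
    (M.pi A ⊗ M.dl B) ≫ ((λ_ (𝟙_ D)).inv ⊗ 𝟙 (B ⊗ B)) from by
      rw [← tensor_comp, Category.comp_id]]
  simp only [Category.assoc, tensorHom_id]
  slice_rhs 2 3 => rw [← comp_whiskerRight, Iso.inv_hom_id, MonoidalCategory.id_whiskerRight]
  rw [Category.id_comp]
  rw [show (M.pi A ⊗ M.dl B) = (M.pi A ⊗ 𝟙 B) ≫ (𝟙 (𝟙_ D) ⊗ M.dl B) from by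
    rw [← tensor_comp, Category.comp_id, Category.id_comp]]
  simp only [Category.assoc, id_tensorHom]
  rw [leftUnitor_naturality, tensorHom_id]

lemma W (A B : D) : M.dl (A ⊗ B) ≫ (M.projr A B ⊗ M.projl A B) = 𝟙 (A ⊗ B) := by
  rw [ComonData.projr, ComonData.projl, M.dl_tensor]
  rw [show ((𝟙 A ⊗ M.pi B) ≫ (ρ_ A).hom) ⊗ ((M.pi A ⊗ 𝟙 B) ≫ (λ_ B).hom) =
    ((𝟙 A ⊗ M.pi B) ⊗ (M.pi A ⊗ 𝟙 B)) ≫ ((ρ_ A).hom ⊗ (λ_ B).hom) from tensor_comp _ _ _ _]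
  have hnat := tensorμ_natural (𝟙 A) (M.pi A) (M.pi B) (𝟙 B)
  slice_lhs 2 3 => rw [← hnat]
  slice_lhs 1 2 => rw [← tensor_comp, M.dl_pi_r, M.dl_pi_l]
  rw [tensorμ_unit_middle]
  simp only [Category.assoc, Category.id_comp]
  rw [← tensor_comp, Iso.inv_hom_id, Iso.inv_hom_id, tensor_id]

lemma dl_mor_tensor {A A' B B' : D} {f : A ⟶ A'} {g : B ⟶ B'}
    (hf : f ≫ M.dl A' = M.dl A ≫ (f ⊗ f)) (hg : g ≫ M.dl B' = M.dl B ≫ (g ⊗ g)) :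
    (f ⊗ g) ≫ M.dl (A' ⊗ B') = M.dl (A ⊗ B) ≫ ((f ⊗ g) ⊗ (f ⊗ g)) := by
  rw [M.dl_tensor, M.dl_tensor]
  calc (f ⊗ g) ≫ (M.dl A' ⊗ M.dl B') ≫ tensorμ A' A' B' B'
      = ((f ≫ M.dl A') ⊗ (g ≫ M.dl B')) ≫ tensorμ A' A' B' B' := by
        rw [tensor_comp_assoc]
    _ = ((M.dl A ≫ (f ⊗ f)) ⊗ (M.dl B ≫ (g ⊗ g))) ≫ tensorμ A' A' B' B' := by rw [hf, hg]
    _ = (M.dl A ⊗ M.dl B) ≫ ((f ⊗ f) ⊗ (g ⊗ g)) ≫ tensorμ A' A' B' B' := by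
        rw [tensor_comp_assoc]
    _ = (M.dl A ⊗ M.dl B) ≫ tensorμ A A B B ≫ ((f ⊗ g) ⊗ (f ⊗ g)) := by
        rw [tensorμ_natural]
  simp only [Category.assoc]

lemma pi_mor_tensor {A A' B B' : D} {f : A ⟶ A'} {g : B ⟶ B'}
    (hf : f ≫ M.pi A' = M.pi A) (hg : g ≫ M.pi B' = M.pi B) :
    (f ⊗ g) ≫ M.pi (A' ⊗ B') = M.pi (A ⊗ B) := by
  rw [M.pi_tensor, M.pi_tensor, ← Category.assoc, ← tensor_comp, hf, hg]

lemma dl_pair_mor {U V₁ V₂ : D} (p₁ : U ⟶ V₁) (p₂ : U ⟶ V₂)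
    (h₁ : p₁ ≫ M.dl V₁ = M.dl U ≫ (p₁ ⊗ p₁)) (h₂ : p₂ ≫ M.dl V₂ = M.dl U ≫ (p₂ ⊗ p₂)) :
    (M.dl U ≫ (p₁ ⊗ p₂)) ≫ M.dl (V₁ ⊗ V₂) =
      M.dl U ≫ ((M.dl U ≫ (p₁ ⊗ p₂)) ⊗ (M.dl U ≫ (p₁ ⊗ p₂))) := by
  have h4 := reassoc_of% (M.dl4 U)
  rw [M.dl_tensor]
  calc (M.dl U ≫ (p₁ ⊗ p₂)) ≫ (M.dl V₁ ⊗ M.dl V₂) ≫ tensorμ V₁ V₁ V₂ V₂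
      = M.dl U ≫ ((p₁ ≫ M.dl V₁) ⊗ (p₂ ≫ M.dl V₂)) ≫ tensorμ V₁ V₁ V₂ V₂ := by
        rw [tensor_comp_assoc]; simp only [Category.assoc]
    _ = M.dl U ≫ ((M.dl U ≫ (p₁ ⊗ p₁)) ⊗ (M.dl U ≫ (p₂ ⊗ p₂))) ≫ tensorμ V₁ V₁ V₂ V₂ := by
        rw [h₁, h₂]
    _ = M.dl U ≫ (M.dl U ⊗ M.dl U) ≫ ((p₁ ⊗ p₁) ⊗ (p₂ ⊗ p₂)) ≫ tensorμ V₁ V₁ V₂ V₂ := by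
        rw [tensor_comp_assoc]
    _ = M.dl U ≫ (M.dl U ⊗ M.dl U) ≫ tensorμ U U U U ≫ ((p₁ ⊗ p₂) ⊗ (p₁ ⊗ p₂)) := by
        rw [tensorμ_natural]
    _ = M.dl U ≫ (M.dl U ⊗ M.dl U) ≫ ((p₁ ⊗ p₂) ⊗ (p₁ ⊗ p₂)) := by rw [h4]
    _ = M.dl U ≫ ((M.dl U ≫ (p₁ ⊗ p₂)) ⊗ (M.dl U ≫ (p₁ ⊗ p₂))) := by
        rw [tensor_comp]

lemma pi_pair_mor {U V₁ V₂ : D} (p₁ : U ⟶ V₁) (p₂ : U ⟶ V₂)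
    (h₁ : p₁ ≫ M.pi V₁ = M.pi U) (h₂ : p₂ ≫ M.pi V₂ = M.pi U) :
    (M.dl U ≫ (p₁ ⊗ p₂)) ≫ M.pi (V₁ ⊗ V₂) = M.pi U := by
  rw [M.pi_tensor]
  calc (M.dl U ≫ (p₁ ⊗ p₂)) ≫ (M.pi V₁ ⊗ M.pi V₂) ≫ (λ_ (𝟙_ D)).hom
      = M.dl U ≫ ((p₁ ≫ M.pi V₁) ⊗ (p₂ ≫ M.pi V₂)) ≫ (λ_ (𝟙_ D)).hom := by
        rw [tensor_comp_assoc]; simp only [Category.assoc]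
    _ = M.dl U ≫ (M.pi U ⊗ M.pi U) ≫ (λ_ (𝟙_ D)).hom := by rw [h₁, h₂]
    _ = M.pi U := by rw [reassoc_of% (M.pi_pi U)]; simp

lemma pi_is_dl_mor (A : D) : M.pi A ≫ M.dl (𝟙_ D) = M.dl A ≫ (M.pi A ⊗ M.pi A) := by
  rw [M.dl_unit, M.pi_pi]

lemma pi_is_pi_mor (A : D) : M.pi A ≫ M.pi (𝟙_ D) = M.pi A := by
  rw [M.pi_unit, Category.comp_id]

end ComonData

/-- Generic data of a commutative monoid on every object of a symmetric monoidal
category, compatible with the tensor product. -/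
structure MonData (D : Type*) [Category D] [MonoidalCategory D] [SymmetricCategory D] where
  mu : ∀ A : D, A ⊗ A ⟶ A
  e : ∀ A : D, 𝟙_ D ⟶ A
  mu_assoc : ∀ A : D, (α_ A A A).hom ≫ (𝟙 A ⊗ mu A) ≫ mu A = (mu A ⊗ 𝟙 A) ≫ mu A
  mu_comm : ∀ A : D, (β_ A A).hom ≫ mu A = mu A
  unit_r : ∀ A : D, (ρ_ A).inv ≫ (𝟙 A ⊗ e A) ≫ mu A = 𝟙 A
  unit_l : ∀ A : D, (λ_ A).inv ≫ (e A ⊗ 𝟙 A) ≫ mu A = 𝟙 A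
  e_unit : e (𝟙_ D) = 𝟙 (𝟙_ D)
  mu_tensor : ∀ A B : D, mu (A ⊗ B) = tensorμ A B A B ≫ (mu A ⊗ mu B)

namespace MonData

variable (N : MonData D)

lemma mu_e_r (A : D) : (𝟙 A ⊗ N.e A) ≫ N.mu A = (ρ_ A).hom := by
  rw [← cancel_epi (ρ_ A).inv, ← Category.assoc]
  simpa using N.unit_r A

lemma mu_e_l (A : D) : (N.e A ⊗ 𝟙 A) ≫ N.mu A = (λ_ A).hom := by
  rw [← cancel_epi (λ_ A).inv, ← Category.assoc]
  simpa using N.unit_l A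

lemma e_e (A : D) : (N.e A ⊗ N.e A) ≫ N.mu A = (λ_ (𝟙_ D)).hom ≫ N.e A := by
  have h : (N.e A ⊗ N.e A) = (𝟙 (𝟙_ D) ⊗ N.e A) ≫ (N.e A ⊗ 𝟙 A) := by
    rw [← tensor_comp, Category.comp_id, Category.id_comp]
  rw [h, Category.assoc, N.mu_e_l, id_tensorHom, leftUnitor_naturality]

lemma unit_unique {A : D} (u : 𝟙_ D ⟶ A)
    (hr : (ρ_ A).inv ≫ (𝟙 A ⊗ u) ≫ N.mu A = 𝟙 A)
    (hl : (λ_ A).inv ≫ (u ⊗ 𝟙 A) ≫ N.mu A = 𝟙 A) : u = N.e A := by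
  have h1 : (λ_ (𝟙_ D)).inv ≫ (N.e A ⊗ u) ≫ N.mu A = u := by
    rw [show (N.e A ⊗ u) = (𝟙 (𝟙_ D) ⊗ u) ≫ (N.e A ⊗ 𝟙 A) from by
      rw [← tensor_comp, Category.id_comp, Category.comp_id]]
    rw [id_tensorHom]
    simp only [Category.assoc]
    rw [← leftUnitor_inv_naturality_assoc, N.unit_l, Category.comp_id]
  have h2 : (ρ_ (𝟙_ D)).inv ≫ (N.e A ⊗ u) ≫ N.mu A = N.e A := by
    rw [show (N.e A ⊗ u) = (N.e A ⊗ 𝟙 (𝟙_ D)) ≫ (𝟙 A ⊗ u) from by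
      rw [← tensor_comp, Category.id_comp, Category.comp_id]]
    rw [tensorHom_id]
    simp only [Category.assoc]
    rw [← rightUnitor_inv_naturality_assoc, hr, Category.comp_id]
  rw [← h1, unitors_inv_equal, h2]

lemma e_tensor (A B : D) : N.e (A ⊗ B) = (λ_ (𝟙_ D)).inv ≫ (N.e A ⊗ N.e B) := by
  refine (N.unit_unique _ ?_ ?_).symm
  · rw [N.mu_tensor]
    have hnat := tensorμ_natural (𝟙 A) (𝟙 B) (N.e A) (N.e B)
    rw [tensor_id] at hnat
    have key : 𝟙 (A ⊗ B) ⊗ ((λ_ (𝟙_ D)).inv ≫ (N.e A ⊗ N.e B)) =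
        ((A ⊗ B) ◁ (λ_ (𝟙_ D)).inv) ≫ (𝟙 (A ⊗ B) ⊗ (N.e A ⊗ N.e B)) := by
      rw [← id_tensorHom, ← tensor_comp, Category.comp_id]
    rw [key]
    simp only [Category.assoc]
    slice_lhs 3 4 => rw [hnat]
    slice_lhs 4 5 => rw [← tensor_comp, N.mu_e_r, N.mu_e_r]
    try simp only [Category.assoc]
    rw [← tensor_right_unitality]
    simp
  · rw [N.mu_tensor]
    have hnat := tensorμ_natural (N.e A) (N.e B) (𝟙 A) (𝟙 B)
    rw [tensor_id] at hnat
    have key : ((λ_ (𝟙_ D)).inv ≫ (N.e A ⊗ N.e B)) ⊗ 𝟙 (A ⊗ B) =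
        ((λ_ (𝟙_ D)).inv ▷ (A ⊗ B)) ≫ ((N.e A ⊗ N.e B) ⊗ 𝟙 (A ⊗ B)) := by
      rw [← tensorHom_id, ← tensor_comp, Category.comp_id]
    rw [key]
    simp only [Category.assoc]
    slice_lhs 3 4 => rw [hnat]
    slice_lhs 4 5 => rw [← tensor_comp, N.mu_e_l, N.mu_e_l]
    try simp only [Category.assoc]
    rw [← tensor_left_unitality]
    simp

lemma hinner_mu (A : D) :
    (α_ A A A).inv ≫ ((β_ A A).hom ⊗ 𝟙 A) ≫ (α_ A A A).hom ≫ (𝟙 A ⊗ N.mu A) ≫ N.mu A =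
      (𝟙 A ⊗ N.mu A) ≫ N.mu A := by
  rw [N.mu_assoc]
  have h2 : ((β_ A A).hom ⊗ 𝟙 A) ≫ (N.mu A ⊗ 𝟙 A) = (N.mu A ⊗ 𝟙 A) := by
    rw [← tensor_comp, N.mu_comm, Category.comp_id]
  have h2' := reassoc_of% h2
  rw [h2', ← N.mu_assoc, Iso.inv_hom_id_assoc]

lemma mu4 (A : D) :
    tensorμ A A A A ≫ (N.mu A ⊗ N.mu A) ≫ N.mu A = (N.mu A ⊗ N.mu A) ≫ N.mu A := by
  dsimp only [tensorμ]
  simp only [← id_tensorHom, ← tensorHom_id]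
  have split : (N.mu A ⊗ N.mu A) = (𝟙 (A ⊗ A) ⊗ N.mu A) ≫ (N.mu A ⊗ 𝟙 A) := by
    rw [← tensor_comp, Category.comp_id, Category.id_comp]
  rw [split]
  simp only [Category.assoc]
  have hnat2 : (α_ A A (A ⊗ A)).inv ≫ (𝟙 (A ⊗ A) ⊗ N.mu A) =
      (𝟙 A ⊗ (𝟙 A ⊗ N.mu A)) ≫ (α_ A A A).inv := by
    have h := associator_inv_naturality (𝟙 A) (𝟙 A) (N.mu A); rw [tensor_id] at h
    exact h.symm
  have hnat2' := reassoc_of% hnat2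
  rw [hnat2']
  have hstep : (α_ A A A).inv ≫ (N.mu A ⊗ 𝟙 A) ≫ N.mu A = (𝟙 A ⊗ N.mu A) ≫ N.mu A := by
    rw [← N.mu_assoc, Iso.inv_hom_id_assoc]
  rw [hstep]
  have merged : (𝟙 A ⊗ (α_ A A A).inv) ≫ (𝟙 A ⊗ ((β_ A A).hom ⊗ 𝟙 A)) ≫
      (𝟙 A ⊗ (α_ A A A).hom) ≫ (𝟙 A ⊗ (𝟙 A ⊗ N.mu A)) ≫ (𝟙 A ⊗ N.mu A) =
      𝟙 A ⊗ ((α_ A A A).inv ≫ ((β_ A A).hom ⊗ 𝟙 A) ≫ (α_ A A A).hom ≫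
        (𝟙 A ⊗ N.mu A) ≫ N.mu A) := by
    simp only [← tensor_comp]; simp
  have merged' := reassoc_of% merged
  rw [merged', N.hinner_mu]
  rw [show (𝟙 A ⊗ ((𝟙 A ⊗ N.mu A) ≫ N.mu A)) =
      (𝟙 A ⊗ (𝟙 A ⊗ N.mu A)) ≫ (𝟙 A ⊗ N.mu A) from by
    rw [← tensor_comp, Category.comp_id]]
  have hnat1 : (α_ A A (A ⊗ A)).hom ≫ (𝟙 A ⊗ (𝟙 A ⊗ N.mu A)) =
      (𝟙 (A ⊗ A) ⊗ N.mu A) ≫ (α_ A A A).hom := by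
    have h := associator_naturality (𝟙 A) (𝟙 A) (N.mu A); rw [tensor_id] at h
    exact h.symm
  have hnat1' := reassoc_of% hnat1
  simp only [Category.assoc]
  rw [hnat1', N.mu_assoc]

/-- right injection `A ⟶ A ⊗ B`. -/
noncomputable def injr (A B : D) : A ⟶ A ⊗ B := (ρ_ A).inv ≫ (𝟙 A ⊗ N.e B)

/-- left injection `B ⟶ A ⊗ B`. -/
noncomputable def injl (A B : D) : B ⟶ A ⊗ B := (λ_ B).inv ≫ (N.e A ⊗ 𝟙 B)

lemma injr_e (A B : D) : N.e A ≫ N.injr A B = N.e (A ⊗ B) := by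
  rw [MonData.injr, N.e_tensor, ← Category.assoc, rightUnitor_inv_naturality, ← tensorHom_id,
    Category.assoc, ← tensor_comp, Category.id_comp, Category.comp_id, unitors_inv_equal]

lemma injl_e (A B : D) : N.e B ≫ N.injl A B = N.e (A ⊗ B) := by
  rw [MonData.injl, N.e_tensor, ← Category.assoc, leftUnitor_inv_naturality, ← id_tensorHom,
    Category.assoc, ← tensor_comp, Category.id_comp, Category.comp_id]

lemma tensorμ_ru' (A : D) : tensorμ A (𝟙_ D) A (𝟙_ D) ≫ (𝟙 (A ⊗ A) ⊗ (λ_ (𝟙_ D)).hom) =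
    ((ρ_ A).hom ⊗ (ρ_ A).hom) ≫ (ρ_ (A ⊗ A)).inv := by
  rw [← cancel_mono (ρ_ (A ⊗ A)).hom]
  simp only [Category.assoc, Iso.inv_hom_id, Category.comp_id, id_tensorHom]
  exact (rightUnitor_monoidal A A).symm

lemma tensorμ_lu' (B : D) : tensorμ (𝟙_ D) B (𝟙_ D) B ≫ ((λ_ (𝟙_ D)).hom ⊗ 𝟙 (B ⊗ B)) =
    ((λ_ B).hom ⊗ (λ_ B).hom) ≫ (λ_ (B ⊗ B)).inv := by
  rw [← cancel_mono (λ_ (B ⊗ B)).hom]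
  simp only [Category.assoc, Iso.inv_hom_id, Category.comp_id, tensorHom_id]
  exact (leftUnitor_monoidal B B).symm

lemma injr_mu (A B : D) :
    N.mu A ≫ N.injr A B = (N.injr A B ⊗ N.injr A B) ≫ N.mu (A ⊗ B) := by
  rw [MonData.injr, N.mu_tensor]
  rw [show ((ρ_ A).inv ≫ (𝟙 A ⊗ N.e B)) ⊗ ((ρ_ A).inv ≫ (𝟙 A ⊗ N.e B)) =
    ((ρ_ A).inv ⊗ (ρ_ A).inv) ≫ ((𝟙 A ⊗ N.e B) ⊗ (𝟙 A ⊗ N.e B)) from tensor_comp _ _ _ _]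
  have hnat := tensorμ_natural (𝟙 A) (N.e B) (𝟙 A) (N.e B)
  rw [tensor_id] at hnat
  slice_rhs 2 3 => rw [hnat]
  slice_rhs 3 4 => rw [← tensor_comp, Category.id_comp, N.e_e]
  rw [show (N.mu A ⊗ (λ_ (𝟙_ D)).hom ≫ N.e B) =
    (𝟙 (A ⊗ A) ⊗ (λ_ (𝟙_ D)).hom) ≫ (N.mu A ⊗ N.e B) from by
      rw [← tensor_comp, Category.id_comp]]
  slice_rhs 2 3 => rw [tensorμ_ru']
  rw [show (N.mu A ⊗ N.e B) = (N.mu A ⊗ 𝟙 (𝟙_ D)) ≫ (𝟙 A ⊗ N.e B) from by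
    rw [← tensor_comp, Category.id_comp, Category.comp_id]]
  slice_rhs 1 2 => rw [← tensor_comp, Iso.inv_hom_id, tensor_id]
  rw [Category.id_comp, tensorHom_id]
  slice_rhs 1 2 => rw [← rightUnitor_inv_naturality]
  simp only [Category.assoc]

lemma injl_mu (A B : D) :
    N.mu B ≫ N.injl A B = (N.injl A B ⊗ N.injl A B) ≫ N.mu (A ⊗ B) := by
  rw [MonData.injl, N.mu_tensor]
  rw [show ((λ_ B).inv ≫ (N.e A ⊗ 𝟙 B)) ⊗ ((λ_ B).inv ≫ (N.e A ⊗ 𝟙 B)) =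
    ((λ_ B).inv ⊗ (λ_ B).inv) ≫ ((N.e A ⊗ 𝟙 B) ⊗ (N.e A ⊗ 𝟙 B)) from tensor_comp _ _ _ _]
  have hnat := tensorμ_natural (N.e A) (𝟙 B) (N.e A) (𝟙 B)
  rw [tensor_id] at hnat
  slice_rhs 2 3 => rw [hnat]
  slice_rhs 3 4 => rw [← tensor_comp, Category.id_comp, N.e_e]
  rw [show ((λ_ (𝟙_ D)).hom ≫ N.e A ⊗ N.mu B) =
    ((λ_ (𝟙_ D)).hom ⊗ 𝟙 (B ⊗ B)) ≫ (N.e A ⊗ N.mu B) from by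
      rw [← tensor_comp, Category.id_comp]]
  slice_rhs 2 3 => rw [tensorμ_lu']
  rw [show (N.e A ⊗ N.mu B) = (𝟙 (𝟙_ D) ⊗ N.mu B) ≫ (N.e A ⊗ 𝟙 B) from by
    rw [← tensor_comp, Category.id_comp, Category.comp_id]]
  slice_rhs 1 2 => rw [← tensor_comp, Iso.inv_hom_id, tensor_id]
  rw [Category.id_comp, id_tensorHom]
  slice_rhs 1 2 => rw [← leftUnitor_inv_naturality]
  simp only [Category.assoc]

lemma Wv (A B : D) : (N.injr A B ⊗ N.injl A B) ≫ N.mu (A ⊗ B) = 𝟙 (A ⊗ B) := by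
  rw [MonData.injr, MonData.injl, N.mu_tensor]
  rw [show ((ρ_ A).inv ≫ (𝟙 A ⊗ N.e B)) ⊗ ((λ_ B).inv ≫ (N.e A ⊗ 𝟙 B)) =
    ((ρ_ A).inv ⊗ (λ_ B).inv) ≫ ((𝟙 A ⊗ N.e B) ⊗ (N.e A ⊗ 𝟙 B)) from tensor_comp _ _ _ _]
  have hnat := tensorμ_natural (𝟙 A) (N.e B) (N.e A) (𝟙 B)
  slice_lhs 2 3 => rw [hnat]
  slice_lhs 3 4 => rw [← tensor_comp, N.mu_e_r, N.mu_e_l]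
  rw [tensorμ_unit_middle]
  simp only [Category.id_comp]
  rw [← tensor_comp, Iso.inv_hom_id, Iso.inv_hom_id, tensor_id]

lemma mu_mor_tensor {A A' B B' : D} {f : A ⟶ A'} {g : B ⟶ B'}
    (hf : N.mu A ≫ f = (f ⊗ f) ≫ N.mu A') (hg : N.mu B ≫ g = (g ⊗ g) ≫ N.mu B') :
    N.mu (A ⊗ B) ≫ (f ⊗ g) = ((f ⊗ g) ⊗ (f ⊗ g)) ≫ N.mu (A' ⊗ B') := by
  rw [N.mu_tensor, N.mu_tensor]
  simp only [Category.assoc]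
  calc tensorμ A B A B ≫ (N.mu A ⊗ N.mu B) ≫ (f ⊗ g)
      = tensorμ A B A B ≫ ((N.mu A ≫ f) ⊗ (N.mu B ≫ g)) := by rw [← tensor_comp]
    _ = tensorμ A B A B ≫ (((f ⊗ f) ≫ N.mu A') ⊗ ((g ⊗ g) ≫ N.mu B')) := by rw [hf, hg]
    _ = tensorμ A B A B ≫ ((f ⊗ f) ⊗ (g ⊗ g)) ≫ (N.mu A' ⊗ N.mu B') := by
        rw [tensor_comp]
    _ = ((f ⊗ g) ⊗ (f ⊗ g)) ≫ tensorμ A' B' A' B' ≫ (N.mu A' ⊗ N.mu B') := by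
        rw [← tensorμ_natural_assoc]

lemma e_mor_tensor {A A' B B' : D} {f : A ⟶ A'} {g : B ⟶ B'}
    (hf : N.e A ≫ f = N.e A') (hg : N.e B ≫ g = N.e B') :
    N.e (A ⊗ B) ≫ (f ⊗ g) = N.e (A' ⊗ B') := by
  rw [N.e_tensor, N.e_tensor, Category.assoc, ← tensor_comp, hf, hg]

lemma mu_pair_mor {P Q V : D} (k₁ : P ⟶ V) (k₂ : Q ⟶ V)
    (h₁ : N.mu P ≫ k₁ = (k₁ ⊗ k₁) ≫ N.mu V) (h₂ : N.mu Q ≫ k₂ = (k₂ ⊗ k₂) ≫ N.mu V) :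
    N.mu (P ⊗ Q) ≫ ((k₁ ⊗ k₂) ≫ N.mu V) =
      (((k₁ ⊗ k₂) ≫ N.mu V) ⊗ ((k₁ ⊗ k₂) ≫ N.mu V)) ≫ N.mu V := by
  rw [N.mu_tensor]
  simp only [Category.assoc]
  calc tensorμ P Q P Q ≫ (N.mu P ⊗ N.mu Q) ≫ (k₁ ⊗ k₂) ≫ N.mu V
      = tensorμ P Q P Q ≫ ((N.mu P ≫ k₁) ⊗ (N.mu Q ≫ k₂)) ≫ N.mu V := by
        rw [tensor_comp_assoc]
    _ = tensorμ P Q P Q ≫ (((k₁ ⊗ k₁) ≫ N.mu V) ⊗ ((k₂ ⊗ k₂) ≫ N.mu V)) ≫ N.mu V := by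
        rw [h₁, h₂]
    _ = tensorμ P Q P Q ≫ ((k₁ ⊗ k₁) ⊗ (k₂ ⊗ k₂)) ≫ (N.mu V ⊗ N.mu V) ≫ N.mu V := by
        rw [tensor_comp_assoc]
    _ = ((k₁ ⊗ k₂) ⊗ (k₁ ⊗ k₂)) ≫ tensorμ V V V V ≫ (N.mu V ⊗ N.mu V) ≫ N.mu V := by
        rw [← tensorμ_natural_assoc]
    _ = ((k₁ ⊗ k₂) ⊗ (k₁ ⊗ k₂)) ≫ (N.mu V ⊗ N.mu V) ≫ N.mu V := by rw [N.mu4]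
    _ = (((k₁ ⊗ k₂) ≫ N.mu V) ⊗ ((k₁ ⊗ k₂) ≫ N.mu V)) ≫ N.mu V := by
        rw [tensor_comp_assoc]

lemma e_pair_mor {P Q V : D} (k₁ : P ⟶ V) (k₂ : Q ⟶ V)
    (h₁ : N.e P ≫ k₁ = N.e V) (h₂ : N.e Q ≫ k₂ = N.e V) :
    N.e (P ⊗ Q) ≫ ((k₁ ⊗ k₂) ≫ N.mu V) = N.e V := by
  rw [N.e_tensor]
  calc ((λ_ (𝟙_ D)).inv ≫ (N.e P ⊗ N.e Q)) ≫ (k₁ ⊗ k₂) ≫ N.mu V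
      = (λ_ (𝟙_ D)).inv ≫ ((N.e P ≫ k₁) ⊗ (N.e Q ≫ k₂)) ≫ N.mu V := by
        simp only [Category.assoc]; rw [tensor_comp_assoc]
    _ = (λ_ (𝟙_ D)).inv ≫ (N.e V ⊗ N.e V) ≫ N.mu V := by rw [h₁, h₂]
    _ = N.e V := by rw [N.e_e, Iso.inv_hom_id_assoc]

lemma mu_is_mu_mor (A : D) : N.mu (A ⊗ A) ≫ N.mu A = (N.mu A ⊗ N.mu A) ≫ N.mu A := by
  rw [N.mu_tensor, Category.assoc, N.mu4]

lemma mu_is_e_mor (A : D) : N.e (A ⊗ A) ≫ N.mu A = N.e A := by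
  rw [N.e_tensor, Category.assoc, N.e_e, Iso.inv_hom_id_assoc]

end MonData

end GenericSide

namespace B3

variable {C : Type u} [Category.{v} C] [MonoidalCategory C] [SymmetricCategory C]
  (S : B3 C)

lemma exch_eq_tensorμ (A B X Y : C) : exch A B X Y = tensorμ A B X Y := by
  simp only [exch, tensorμ, id_tensorHom, tensorHom_id]

/-- The `∧`-comonoid data of a `B3`-category. -/
noncomputable def comon : ComonData C where
  dl := S.Δ
  pi := S.Pi
  coassoc := S.coassoc
  cocomm := S.cocomm
  counit_r := S.counit_r
  counit_l := S.counit_l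
  pi_unit := S.B2a
  dl_tensor := fun A B => by rw [S.B2c, exch_eq_tensorμ]

/-- The `∨`-monoid data of a `B3`-category, living in the `∨`-monoidal structure. -/
noncomputable def mon : MonData (VCat S.toVStr) where
  mu A := S.nab A
  e A := S.cap A
  mu_assoc A := S.vcoassoc A
  mu_comm A := S.vcomm A
  unit_r A := S.vunit_r A
  unit_l A := S.vunit_l A
  e_unit := S.B2a'
  mu_tensor A B := by exact S.B2c' A B

@[simp] lemma comon_dl : S.comon.dl = S.Δ := rfl
@[simp] lemma comon_pi : S.comon.pi = S.Pi := rfl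

/-- coprojection `A ⟶ A ∨ X`. -/
noncomputable def inr (A X : C) : A ⟶ S.vee A X :=
  (S.vrunit A).inv ≫ S.vHom (𝟙 A) (S.cap X)

/-- coprojection `X ⟶ A ∨ X`. -/
noncomputable def inl (A X : C) : X ⟶ S.vee A X :=
  (S.vlunit X).inv ≫ S.vHom (S.cap A) (𝟙 X)

lemma inr_eq (A X : C) : S.inr A X = S.mon.injr A X := rfl
lemma inl_eq (A X : C) : S.inl A X = S.mon.injl A X := rfl

lemma inr_nab (A X : C) :
    S.nab A ≫ S.inr A X = S.vHom (S.inr A X) (S.inr A X) ≫ S.nab (S.vee A X) := by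
  exact S.mon.injr_mu A X

lemma inl_nab (A X : C) :
    S.nab X ≫ S.inl A X = S.vHom (S.inl A X) (S.inl A X) ≫ S.nab (S.vee A X) := by
  exact S.mon.injl_mu A X

lemma inr_cap (A X : C) : S.cap A ≫ S.inr A X = S.cap (S.vee A X) := by
  exact S.mon.injr_e A X

lemma inl_cap (A X : C) : S.cap X ≫ S.inl A X = S.cap (S.vee A X) := by
  exact S.mon.injl_e A X

lemma vWv (A X : C) : S.vHom (S.inr A X) (S.inl A X) ≫ S.nab (S.vee A X) = 𝟙 _ := by
  exact S.mon.Wv A X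

lemma mix_nab_tensor {A A' B B' : C} {f : A ⟶ A'} {g : B ⟶ B'}
    (hf : S.nab A ≫ f = S.vHom f f ≫ S.nab A') (hg : S.nab B ≫ g = S.vHom g g ≫ S.nab B') :
    S.nab (A ⊗ B) ≫ (f ⊗ g) = S.vHom (f ⊗ g) (f ⊗ g) ≫ S.nab (A' ⊗ B') := by
  rw [S.B3c', S.B3c']
  have h := reassoc_of% (S.med_nat f g f g)
  rw [h]
  simp only [Category.assoc]
  rw [← tensor_comp, hf, hg, tensor_comp]
  try simp only [Category.assoc]

lemma mix_cap_tensor {A A' B B' : C} {f : A ⟶ A'} {g : B ⟶ B'}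
    (hf : S.cap A ≫ f = S.cap A') (hg : S.cap B ≫ g = S.cap B') :
    S.cap (A ⊗ B) ≫ (f ⊗ g) = S.cap (A' ⊗ B') := by
  rw [S.B3b', S.B3b', Category.assoc, ← tensor_comp, hf, hg]

lemma mix_pi_vee {A A' B B' : C} {f : A ⟶ A'} {g : B ⟶ B'}
    (hf : f ≫ S.Pi A' = S.Pi A) (hg : g ≫ S.Pi B' = S.Pi B) :
    S.vHom f g ≫ S.Pi (S.vee A' B') = S.Pi (S.vee A B) := by
  rw [S.B3b, S.B3b, ← Category.assoc, ← S.vHom_comp, hf, hg]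

lemma mix_dl_vee {A A' B B' : C} {f : A ⟶ A'} {g : B ⟶ B'}
    (hf : f ≫ S.Δ A' = S.Δ A ≫ (f ⊗ f)) (hg : g ≫ S.Δ B' = S.Δ B ≫ (g ⊗ g)) :
    S.vHom f g ≫ S.Δ (S.vee A' B') = S.Δ (S.vee A B) ≫ (S.vHom f g ⊗ S.vHom f g) := by
  rw [S.B3c, S.B3c, ← Category.assoc, ← S.vHom_comp, hf, hg, S.vHom_comp]
  simp only [Category.assoc]
  rw [S.med_nat f f g g]

lemma med_repr (A B X Y : C) :
    S.med A B X Y = S.Δ (S.vee (A ⊗ B) (X ⊗ Y)) ≫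
      (S.vHom (S.comon.projr A B) (S.comon.projr X Y) ⊗
        S.vHom (S.comon.projl A B) (S.comon.projl X Y)) := by
  have w1 : S.Δ (A ⊗ B) ≫ (S.comon.projr A B ⊗ S.comon.projl A B) = 𝟙 (A ⊗ B) := S.comon.W A B
  have w2 : S.Δ (X ⊗ Y) ≫ (S.comon.projr X Y ⊗ S.comon.projl X Y) = 𝟙 (X ⊗ Y) := S.comon.W X Y
  rw [S.B3c, Category.assoc, ← S.med_nat, ← Category.assoc, ← S.vHom_comp, w1, w2, S.vHom_id,
    Category.id_comp]

lemma med_repr' (A B X Y : C) :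
    S.med A B X Y = S.vHom (S.inr A X ⊗ S.inr B Y) (S.inl A X ⊗ S.inl B Y) ≫
      S.nab (S.vee A X ⊗ S.vee B Y) := by
  rw [S.B3c']
  have h := reassoc_of% (S.med_nat (S.inr A X) (S.inr B Y) (S.inl A X) (S.inl B Y))
  rw [h]
  rw [← tensor_comp, S.vWv, S.vWv, tensor_id, Category.comp_id]

lemma pi_vee_tt : S.Pi (S.vee (𝟙_ C) (𝟙_ C)) = S.nm := by
  rw [S.B3b, S.B2a, S.vHom_id, Category.id_comp]

end B3

namespace B3

variable {C : Type u} [Category.{v} C] [MonoidalCategory C] [SymmetricCategory C]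
  (S : B3 C)

lemma strong_tensor {A A' B B' : C} (f : A ⟶ A') (g : B ⟶ B')
    (hf : S.Strong f) (hg : S.Strong g) : S.Strong (f ⊗ g) := by
  obtain ⟨hf1, hf2, hf3, hf4⟩ := hf
  obtain ⟨hg1, hg2, hg3, hg4⟩ := hg
  refine ⟨S.mix_nab_tensor hf1 hg1, S.mix_cap_tensor hf2 hg2, ?_, ?_⟩
  · exact S.comon.pi_mor_tensor hf3 hg3
  · exact S.comon.dl_mor_tensor hf4 hg4

lemma strong_vee {A A' B B' : C} (f : A ⟶ A') (g : B ⟶ B')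
    (hf : S.Strong f) (hg : S.Strong g) : S.Strong (S.vHom f g) := by
  obtain ⟨hf1, hf2, hf3, hf4⟩ := hf
  obtain ⟨hg1, hg2, hg3, hg4⟩ := hg
  refine ⟨?_, ?_, S.mix_pi_vee hf3 hg3, S.mix_dl_vee hf4 hg4⟩
  · exact S.mon.mu_mor_tensor hf1 hg1
  · exact S.mon.e_mor_tensor hf2 hg2

lemma strong_nm : S.Strong S.nm := by
  refine ⟨?_, ?_, ?_, ?_⟩
  · rw [S.B3a]
    exact S.mon.mu_is_mu_mor (𝟙_ C)
  · rw [S.B3a]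
    exact S.mon.mu_is_e_mor (𝟙_ C)
  · rw [S.B2a, Category.comp_id, S.pi_vee_tt]
  · have h := S.comon.pi_is_dl_mor (S.vee (𝟙_ C) (𝟙_ C))
    simp only [comon_pi, comon_dl] at h
    rw [S.pi_vee_tt] at h
    exact h

lemma strong_med (A B X Y : C) : S.Strong (S.med A B X Y) := by
  have hp₁ : S.vHom (S.comon.projr A B) (S.comon.projr X Y) ≫ S.Pi (S.vee A X) =
      S.Pi (S.vee (A ⊗ B) (X ⊗ Y)) :=
    S.mix_pi_vee (S.comon.projr_pi A B) (S.comon.projr_pi X Y)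
  have hp₂ : S.vHom (S.comon.projl A B) (S.comon.projl X Y) ≫ S.Pi (S.vee B Y) =
      S.Pi (S.vee (A ⊗ B) (X ⊗ Y)) :=
    S.mix_pi_vee (S.comon.projl_pi A B) (S.comon.projl_pi X Y)
  have hd₁ : S.vHom (S.comon.projr A B) (S.comon.projr X Y) ≫ S.Δ (S.vee A X) =
      S.Δ (S.vee (A ⊗ B) (X ⊗ Y)) ≫
        (S.vHom (S.comon.projr A B) (S.comon.projr X Y) ⊗
          S.vHom (S.comon.projr A B) (S.comon.projr X Y)) :=
    S.mix_dl_vee (S.comon.projr_dl A B) (S.comon.projr_dl X Y)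
  have hd₂ : S.vHom (S.comon.projl A B) (S.comon.projl X Y) ≫ S.Δ (S.vee B Y) =
      S.Δ (S.vee (A ⊗ B) (X ⊗ Y)) ≫
        (S.vHom (S.comon.projl A B) (S.comon.projl X Y) ⊗
          S.vHom (S.comon.projl A B) (S.comon.projl X Y)) :=
    S.mix_dl_vee (S.comon.projl_dl A B) (S.comon.projl_dl X Y)
  have hn₁ : S.nab (A ⊗ B) ≫ (S.inr A X ⊗ S.inr B Y) =
      S.vHom (S.inr A X ⊗ S.inr B Y) (S.inr A X ⊗ S.inr B Y) ≫
        S.nab (S.vee A X ⊗ S.vee B Y) :=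
    S.mix_nab_tensor (S.inr_nab A X) (S.inr_nab B Y)
  have hn₂ : S.nab (X ⊗ Y) ≫ (S.inl A X ⊗ S.inl B Y) =
      S.vHom (S.inl A X ⊗ S.inl B Y) (S.inl A X ⊗ S.inl B Y) ≫
        S.nab (S.vee A X ⊗ S.vee B Y) :=
    S.mix_nab_tensor (S.inl_nab A X) (S.inl_nab B Y)
  have hc₁ : S.cap (A ⊗ B) ≫ (S.inr A X ⊗ S.inr B Y) = S.cap (S.vee A X ⊗ S.vee B Y) :=
    S.mix_cap_tensor (S.inr_cap A X) (S.inr_cap B Y)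
  have hc₂ : S.cap (X ⊗ Y) ≫ (S.inl A X ⊗ S.inl B Y) = S.cap (S.vee A X ⊗ S.vee B Y) :=
    S.mix_cap_tensor (S.inl_cap A X) (S.inl_cap B Y)
  refine ⟨?_, ?_, ?_, ?_⟩
  · rw [S.med_repr']
    exact S.mon.mu_pair_mor _ _ hn₁ hn₂
  · rw [S.med_repr']
    exact S.mon.e_pair_mor _ _ hc₁ hc₂
  · rw [S.med_repr]
    exact S.comon.pi_pair_mor _ _ hp₁ hp₂
  · rw [S.med_repr]
    exact S.comon.dl_pair_mor _ _ hd₁ hd₂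

end B3

/-- In a `B3`-category, the medial map and the nullary medial map are strong,
and the strong maps are closed under `∧` and `∨`. -/
theorem stmt14 {C : Type u} [Category.{v} C] [MonoidalCategory C] [SymmetricCategory C]
    (S : B3 C) :
    (∀ A B X Y : C, S.Strong (S.med A B X Y)) ∧
    S.Strong S.nm ∧
    (∀ {A A' B B' : C} (f : A ⟶ A') (g : B ⟶ B'),
      S.Strong f → S.Strong g → S.Strong (f ⊗ g)) ∧
    (∀ {A A' B B' : C} (f : A ⟶ A') (g : B ⟶ B'),
      S.Strong f → S.Strong g → S.Strong (S.vHom f g)) := by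
  exact ⟨S.strong_med, S.strong_nm,
    fun f g hf hg => S.strong_tensor f g hf hg,
    fun f g hf hg => S.strong_vee f g hf hg⟩
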